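/- Let ≺ be the relation on nonempty compact subsets of [-1,1] defined by K'' ≺ K iff K is nonempty compact and there exists a nonempty compact K' ⊆ K with |K'| ≤ 1/2 (i.e., all elements of K' have absolute value ≤ 1/2) and K'' = 2K'. Then K is in the accessible (well-founded) part of ≺ if and only if K is a nonempty compact subset of [-1,1] with 0 ∉ K. -/

import Mathlib

/-- The type of nonempty compact subsets of `[-1,1]`. -/
def CompactI : Type :=
  {K : Set ℝ // IsCompact K ∧ K.Nonempty ∧ K ⊆ Set.Icc (-1) 1}

/-- The relation `K'' ≺ K`: there is a nonempty compact `K' ⊆ K` with `|K'| ≤ 1/2`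
(all elements of `K'` have absolute value `≤ 1/2`) and `K'' = 2K'`. -/
def compactPrec (K'' K : CompactI) : Prop :=
  ∃ K' : CompactI, K'.1 ⊆ K.1 ∧ (∀ x ∈ K'.1, |x| ≤ 1/2) ∧
    K''.1 = (fun x : ℝ => 2 * x) '' K'.1

lemma acc_irrefl' {α : Type*} {r : α → α → Prop} {x : α} (h : Acc r x) : ¬ r x x := by
  induction h with
  | intro y _ ih => exact fun hyy => ih y hyy hyy

lemma acc_of_pow_lt : ∀ n : ℕ, ∀ K : CompactI,
    (∀ x ∈ K.1, (1/2 : ℝ)^n < |x|) → Acc compactPrec K := by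
  intro n
  induction n with
  | zero =>
    intro K h
    constructor
    rintro K'' ⟨K', hsub, hhalf, heq⟩
    exfalso
    obtain ⟨x, hx⟩ := K'.2.2.1
    have h1 := hhalf x hx
    have h2 := h x (hsub hx)
    simp only [pow_zero] at h2
    linarith
  | succ n ih =>
    intro K h
    constructor
    rintro K'' ⟨K', hsub, hhalf, heq⟩
    apply ih
    intro x hx
    rw [heq] at hx
    obtain ⟨y, hy, rfl⟩ := hx
    have hy' := h y (hsub hy)
    rw [abs_mul, abs_two]
    have : (1/2 : ℝ)^n = 2 * (1/2 : ℝ)^(n+1) := by ring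
    rw [this]
    linarith

/-- A nonempty compact subset `K` of `[-1,1]` is in the accessible (well-founded) part of
the relation `≺` if and only if `0 ∉ K`. -/
theorem stmt15 (K : CompactI) : Acc compactPrec K ↔ 0 ∉ K.1 := by
  constructor
  · intro hacc h0
    have hz : IsCompact ({0} : Set ℝ) ∧ ({0} : Set ℝ).Nonempty ∧
        ({0} : Set ℝ) ⊆ Set.Icc (-1) 1 := by
      refine ⟨isCompact_singleton, Set.singleton_nonempty 0, ?_⟩
      rw [Set.singleton_subset_iff]
      constructor <;> norm_num
    set z : CompactI := ⟨{0}, hz⟩ with hzdef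
    have hprec : ∀ W : CompactI, (0 : ℝ) ∈ W.1 → compactPrec z W := by
      intro W hW
      refine ⟨z, ?_, ?_, ?_⟩
      · intro x hx; rw [Set.mem_singleton_iff] at hx; rwa [hx]
      · intro x hx; rw [Set.mem_singleton_iff] at hx; rw [hx]; norm_num
      · ext x
        simp [Set.mem_image, hzdef]
    have haccz : Acc compactPrec z := hacc.inv (hprec K h0)
    exact acc_irrefl' haccz (hprec z rfl)
  · intro h0
    have hcl : IsClosed K.1 := K.2.1.isClosed
    have hpos : 0 < Metric.infDist (0 : ℝ) K.1 := by
      rw [← hcl.notMem_iff_infDist_pos K.2.2.1]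
      exact h0
    obtain ⟨n, hn⟩ := exists_pow_lt_of_lt_one hpos (by norm_num : (1/2 : ℝ) < 1)
    apply acc_of_pow_lt n
    intro x hx
    have hle : Metric.infDist (0 : ℝ) K.1 ≤ dist 0 x := Metric.infDist_le_dist_of_mem hx
    rw [Real.dist_eq] at hle
    simp only [zero_sub, abs_neg] at hle
    linarith
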